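/- Let M₁, ..., M_k be real symmetric matrices of sizes n₁, ..., n_k with constant row sums μ₁, ..., μ_k, let M = diag(M₁, ..., M_k), n = Σnᵢ, and let γ ∈ ℝ. Then det(xI − M − γJ) · ∏ᵢ(x − μᵢ) = ∏ᵢ det(xI − Mᵢ) · det(C), where C is the k×k matrix with C_{ii} = x − μᵢ − γnᵢ and C_{ij} = −γnⱼ for i ≠ j. -/

import Mathlib

open Matrix Polynomial BigOperators

lemma my_det_blockDiagonal' {k : ℕ} {nn : Fin k → ℕ}
    (d : ∀ i, Matrix (Fin (nn i)) (Fin (nn i)) ℝ) :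
    (blockDiagonal' d).det = ∏ i, (d i).det := by
  rw [(blockTriangular_blockDiagonal' d).det_fintype]
  refine Finset.prod_congr rfl fun i _ => ?_
  let e : Fin (nn i) ≃ {a : Σ j, Fin (nn j) // a.1 = i} :=
  { toFun := fun a => ⟨⟨i, a⟩, rfl⟩
    invFun := fun p => Fin.cast (congrArg nn p.2) p.1.2
    left_inv := fun a => rfl
    right_inv := fun p => by rcases p with ⟨⟨j, a⟩, h⟩; subst h; rfl }
  rw [← Matrix.det_submatrix_equiv_self e]
  congr 1
  ext a b
  simp [Matrix.toSquareBlock, Matrix.toSquareBlockProp, e]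

lemma key {k : ℕ} (nn : Fin k → ℕ)
    (M : ∀ i, Matrix (Fin (nn i)) (Fin (nn i)) ℝ)
    (μ : Fin k → ℝ) (γ : ℝ)
    (hrow : ∀ i, (M i) *ᵥ (fun _ => (1 : ℝ)) = μ i • (fun _ => (1 : ℝ)))
    (x : ℝ) (hx : ∀ i, x - μ i ≠ 0) :
    (x • (1 : Matrix ((i : Fin k) × Fin (nn i)) ((i : Fin k) × Fin (nn i)) ℝ)
        - Matrix.blockDiagonal' M - γ • (Matrix.of fun _ _ => (1 : ℝ))).det *
          ∏ i, (x - μ i) =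
    (∏ i, (x • (1 : Matrix (Fin (nn i)) (Fin (nn i)) ℝ) - M i).det) *
      (Matrix.of fun i j : Fin k =>
        if i = j then x - μ i - γ * nn i else -γ * nn j).det := by
  classical
  set c : Fin k → ℝ := fun i => -γ / (x - μ i) with hc
  set A : Matrix ((i : Fin k) × Fin (nn i)) ((i : Fin k) × Fin (nn i)) ℝ :=
    x • 1 - Matrix.blockDiagonal' M with hA
  -- row sums of M i
  have hsum : ∀ i (a : Fin (nn i)), (∑ b, M i a b) = μ i := by
    intro i a
    have := congrFun (hrow i) a
    simpa [Matrix.mulVec, dotProduct] using this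
  have hAw : A *ᵥ (fun p => c p.1) = fun _ => -γ := by
    funext p
    obtain ⟨i, a⟩ := p
    have hbd : (Matrix.blockDiagonal' M *ᵥ fun p => c p.1) ⟨i, a⟩ = μ i * c i := by
      simp only [Matrix.mulVec, dotProduct]
      rw [← Finset.univ_sigma_univ, Finset.sum_sigma]
      rw [Finset.sum_eq_single i]
      · rw [← hsum i a, Finset.sum_mul]
        refine Finset.sum_congr rfl fun b _ => ?_
        simp
      · intro j _ hj
        apply Finset.sum_eq_zero
        intro b _
        rw [Matrix.blockDiagonal'_apply_ne M a b (Ne.symm hj)]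
        ring
      · simp
    have : (A *ᵥ fun p => c p.1) ⟨i, a⟩
        = x * c i - μ i * c i := by
      rw [hA, Matrix.sub_mulVec]
      simp [hbd, Matrix.smul_mulVec]
    rw [this, hc]
    have h := hx i
    field_simp
    ring
  -- LHS matrix as A * (1 + col w * row 1)
  have h1 : x • (1 : Matrix ((i : Fin k) × Fin (nn i)) ((i : Fin k) × Fin (nn i)) ℝ)
        - Matrix.blockDiagonal' M - γ • (Matrix.of fun _ _ => (1 : ℝ))
      = A * (1 + Matrix.replicateCol Unit (fun p => c p.1) * Matrix.replicateRow Unit (fun _ => (1:ℝ))) := by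
    rw [Matrix.mul_add, Matrix.mul_one, ← Matrix.mul_assoc, ← Matrix.replicateCol_mulVec, hAw]
    ext p q
    simp [Matrix.mul_apply, hA]
    ring
  -- RHS matrix as D * (1 + col c * row nn)
  have h2 : (Matrix.of fun i j : Fin k =>
        if i = j then x - μ i - γ * nn i else -γ * nn j)
      = Matrix.diagonal (fun i => x - μ i) *
        (1 + Matrix.replicateCol Unit c * Matrix.replicateRow Unit (fun j => (nn j : ℝ))) := by
    rw [Matrix.mul_add, Matrix.mul_one, ← Matrix.mul_assoc, ← Matrix.replicateCol_mulVec]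
    have : Matrix.diagonal (fun i => x - μ i) *ᵥ c = fun _ => -γ := by
      funext i
      simp only [Matrix.mulVec_diagonal, hc]
      rw [mul_comm, div_mul_cancel₀ _ (hx i)]
    rw [this]
    ext i j
    by_cases h : i = j <;> simp [Matrix.mul_apply, Matrix.diagonal, h] <;> ring
  have hAdet : A.det = ∏ i, (x • (1 : Matrix (Fin (nn i)) (Fin (nn i)) ℝ) - M i).det := by
    have : A = Matrix.blockDiagonal' (fun i => x • 1 - M i) := by
      ext ⟨i, a⟩ ⟨j, b⟩
      rcases eq_or_ne i j with h | h
      · subst h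
        simp [hA, Matrix.one_apply, Matrix.blockDiagonal'_apply_eq]
      · have hne : (⟨i,a⟩ : (i : Fin k) × Fin (nn i)) ≠ ⟨j,b⟩ :=
          fun hcon => h (congrArg Sigma.fst hcon)
        simp [hA, Matrix.blockDiagonal'_apply_ne _ _ _ h, Matrix.one_apply_ne hne]
    rw [this, my_det_blockDiagonal']
  rw [h1, h2, Matrix.det_mul, Matrix.det_mul, Matrix.det_one_add_replicateCol_mul_replicateRow,
    Matrix.det_one_add_replicateCol_mul_replicateRow, Matrix.det_diagonal, hAdet]
  have hdot1 : (fun _ => (1:ℝ)) ⬝ᵥ (fun p : (i : Fin k) × Fin (nn i) => c p.1)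
      = ∑ i, (nn i : ℝ) * c i := by
    simp only [dotProduct, one_mul]
    rw [← Finset.univ_sigma_univ, Finset.sum_sigma]
    refine Finset.sum_congr rfl fun i _ => ?_
    simp [Finset.sum_const, mul_comm]
  have hdot2 : (fun j => (nn j : ℝ)) ⬝ᵥ c = ∑ i, (nn i : ℝ) * c i := by
    simp [dotProduct]
  rw [hdot1, hdot2]
  ring

/-- For `M = diag(M₁, …, M_k)` with real symmetric blocks `Mᵢ` of size `nᵢ`
having constant row sums `μᵢ`, and any real `γ`,
`det(xI − M − γJ)·∏ᵢ(x − μᵢ) = ∏ᵢ det(xI − Mᵢ)·det(C)`, where `C` is the `k×k` matrix with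
`C_{ii} = x − μᵢ − γnᵢ` and `C_{ij} = −γnⱼ` for `i ≠ j`. -/
theorem stmt10 {k : ℕ} (nn : Fin k → ℕ)
    (M : ∀ i, Matrix (Fin (nn i)) (Fin (nn i)) ℝ)
    (hsymm : ∀ i, (M i).IsSymm)
    (μ : Fin k → ℝ) (γ : ℝ)
    (hrow : ∀ i, (M i) *ᵥ (fun _ => (1 : ℝ)) = μ i • (fun _ => (1 : ℝ)))
    (Mbd J : Matrix ((i : Fin k) × Fin (nn i)) ((i : Fin k) × Fin (nn i)) ℝ)
    (hMbd : Mbd = Matrix.blockDiagonal' M)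
    (hJ : J = Matrix.of fun _ _ => (1 : ℝ)) :
    ∀ x : ℝ,
      (x • (1 : Matrix ((i : Fin k) × Fin (nn i)) ((i : Fin k) × Fin (nn i)) ℝ) - Mbd - γ • J).det *
          ∏ i, (x - μ i) =
        (∏ i, (x • (1 : Matrix (Fin (nn i)) (Fin (nn i)) ℝ) - M i).det) *
          (Matrix.of fun i j : Fin k =>
            if i = j then x - μ i - γ * nn i else -γ * nn j).det := by
  subst hMbd hJ
  set f : ℝ → ℝ := fun x =>
    (x • (1 : Matrix ((i : Fin k) × Fin (nn i)) ((i : Fin k) × Fin (nn i)) ℝ)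
      - Matrix.blockDiagonal' M - γ • (Matrix.of fun _ _ => (1 : ℝ))).det * ∏ i, (x - μ i)
    with hf
  set g : ℝ → ℝ := fun x =>
    (∏ i, (x • (1 : Matrix (Fin (nn i)) (Fin (nn i)) ℝ) - M i).det) *
      (Matrix.of fun i j : Fin k =>
        if i = j then x - μ i - γ * nn i else -γ * nn j).det with hg
  have hfc : Continuous f := by
    apply Continuous.mul
    · apply Continuous.matrix_det
      exact ((continuous_id.smul continuous_const).sub continuous_const).sub continuous_const
    · exact continuous_finset_prod _ fun i _ => continuous_id.sub continuous_const
  have hgc : Continuous g := by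
    apply Continuous.mul
    · exact continuous_finset_prod _ fun i _ => Continuous.matrix_det
        ((continuous_id.smul continuous_const).sub continuous_const)
    · apply Continuous.matrix_det
      apply continuous_matrix
      intro i j
      simp only [Matrix.of_apply]
      split_ifs
      · exact (continuous_id.sub continuous_const).sub continuous_const
      · exact continuous_const
  have hdense : Dense ((Set.range μ)ᶜ) :=
    ((Set.finite_range μ).countable).dense_compl ℝ
  have heq : f = g := by
    refine hfc.ext_on hdense hgc fun x hx => ?_
    have hx' : ∀ i, x - μ i ≠ 0 := by
      intro i h
      exact hx ⟨i, by linarith⟩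
    exact key nn M μ γ hrow x hx'
  intro x
  exact congrFun heq x
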